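/- arXiv:2311.12402 — 2 statements merged into one kernel-verified Lean document; each statement's English description precedes it below -/
import Mathlib

section
/- Let Λ₀ ⋊ A₄ be the semidirect product where Λ₀ = {(x₁,x₂,x₃,x₄) ∈ ℤ⁴ : x₁+x₂+x₃+x₄ = 0} and A₄ acts by permuting coordinates. Then every group homomorphism from Λ₀ ⋊ A₄ to the infinite dihedral group D_∞ has finite image. -/
/-- The subgroup `Λ₀` of `ℤⁿ` consisting of tuples whose coordinates sum to zero. -/
def sumZero (n : ℕ) : AddSubgroup (Fin n → ℤ) where
  carrier := {x | ∑ i, x i = 0}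
  add_mem' := by
    intro a b ha hb
    simp only [Set.mem_setOf_eq, Pi.add_apply, Finset.sum_add_distrib] at *
    rw [ha, hb, add_zero]
  zero_mem' := by simp
  neg_mem' := by
    intro a ha
    simp only [Set.mem_setOf_eq, Pi.neg_apply, Finset.sum_neg_distrib] at *
    rw [ha, neg_zero]

/-- The multiplicative group structure that older Mathlib put on `AddAut A`
(multiplication is composition), restored here since `AddAut A` is now an additive group. -/
instance AddAut.groupOld (A : Type*) [Add A] : Group (AddAut A) where
  mul g h := AddEquiv.trans h g
  one := AddEquiv.refl _
  inv := AddEquiv.symm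
  mul_assoc _ _ _ := rfl
  one_mul _ := rfl
  mul_one _ := rfl
  inv_mul_cancel := AddEquiv.self_trans_symm

/-- The inverse in `AddAut.groupOld` is `symm`. -/
@[simp]
theorem AddAut.inv_apply_old {A : Type*} [Add A] (e : AddAut A) (a : A) : e⁻¹ a = e.symm a :=
  rfl

/-- The identity in `AddAut.groupOld` acts trivially. -/
@[simp]
theorem AddAut.one_apply_old {A : Type*} [Add A] (a : A) : (1 : AddAut A) a = a :=
  rfl

/-- The action of permutations on `Λ₀` by permuting coordinates. -/
def permAddAut (n : ℕ) : Equiv.Perm (Fin n) →* AddAut (sumZero n) where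
  toFun σ :=
    { toFun := fun x => ⟨x.1 ∘ σ.symm, by
        have := x.2
        show ∑ i, _ = 0
        simpa [Function.comp] using (Equiv.sum_comp σ.symm x.1).trans this⟩
      invFun := fun x => ⟨x.1 ∘ σ, by
        have := x.2
        show ∑ i, _ = 0
        simpa [Function.comp] using (Equiv.sum_comp σ x.1).trans this⟩
      left_inv := fun x => by
        ext i
        simp
      right_inv := fun x => by
        ext i
        simp
      map_add' := fun x y => rfl }
  map_one' := by
    ext x i
    rfl
  map_mul' σ τ := by
    ext x i
    rfl

/-- The action of the alternating group on `Multiplicative Λ₀` by permuting coordinates. -/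
def altAct (n : ℕ) : alternatingGroup (Fin n) →* MulAut (Multiplicative (sumZero n)) where
  toFun σ :=
    { toFun := fun x => Multiplicative.ofAdd (permAddAut n σ.1 x.toAdd)
      invFun := fun x => Multiplicative.ofAdd (permAddAut n σ.1⁻¹ x.toAdd)
      left_inv := fun x => by simp
      right_inv := fun x => by simp
      map_mul' := fun x y => by
        show Multiplicative.ofAdd (permAddAut n σ.1 (x * y).toAdd) = _
        rw [show (x * y).toAdd = x.toAdd + y.toAdd from rfl, map_add, ofAdd_add] }
  map_one' := by
    ext x : 1
    show Multiplicative.ofAdd (permAddAut n (1 : Equiv.Perm (Fin n)) x.toAdd) = x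
    simp
  map_mul' σ τ := by
    ext x : 1
    show Multiplicative.ofAdd (permAddAut n (σ.1 * τ.1) x.toAdd) = _
    rw [map_mul]
    rfl

/-- The semidirect product `Λ₀ ⋊ Aₙ`. -/
abbrev LamSemidirect (n : ℕ) :=
  Multiplicative (sumZero n) ⋊[altAct n] alternatingGroup (Fin n)


section Aux

private lemma dihedral_cube (x : DihedralGroup 0) (h : x ^ 3 = 1) : x = 1 := by
  cases x with
  | r i =>
    simp [pow_succ, DihedralGroup.one_def, -DihedralGroup.r_zero] at h ⊢
    exact (by omega : ∀ j : ℤ, j + j + j = 0 → j = 0) i h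
  | sr i =>
    exfalso
    simp [pow_succ, DihedralGroup.one_def, -DihedralGroup.r_zero] at h

set_option maxHeartbeats 1000000 in
set_option maxRecDepth 100000 in
private lemma perm_decomp : ∀ g : Equiv.Perm (Fin 4), Equiv.Perm.sign g = 1 →
    ∃ a b : Equiv.Perm (Fin 4), Equiv.Perm.sign a = 1 ∧ Equiv.Perm.sign b = 1 ∧
      a ^ 3 = 1 ∧ b ^ 3 = 1 ∧ g = a * b := by decide

private lemma alt_decomp : ∀ g : alternatingGroup (Fin 4), ∃ a b : alternatingGroup (Fin 4),
    a ^ 3 = 1 ∧ b ^ 3 = 1 ∧ g = a * b := by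
  rintro ⟨g, hg⟩
  rw [Equiv.Perm.mem_alternatingGroup] at hg
  obtain ⟨a, b, ha, hb, ha3, hb3, hab⟩ := perm_decomp g hg
  exact ⟨⟨a, Equiv.Perm.mem_alternatingGroup.2 ha⟩, ⟨b, Equiv.Perm.mem_alternatingGroup.2 hb⟩,
    Subtype.ext ha3, Subtype.ext hb3, Subtype.ext hab⟩

/-- helper constructor for elements of `sumZero 4` -/
private def vv (f : Fin 4 → ℤ) (h : ∑ i, f i = 0 := by decide) : sumZero 4 := ⟨f, h⟩

private def c012 : Equiv.Perm (Fin 4) := ⟨![1,2,0,3], ![2,0,1,3], by decide, by decide⟩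
private def c132 : Equiv.Perm (Fin 4) := ⟨![0,3,1,2], ![0,2,3,1], by decide, by decide⟩
private def c013 : Equiv.Perm (Fin 4) := ⟨![1,3,2,0], ![3,0,2,1], by decide, by decide⟩
private def c021 : Equiv.Perm (Fin 4) := ⟨![2,0,1,3], ![1,2,0,3], by decide, by decide⟩

private lemma sumZero_decomp (u : sumZero 4) :
    u = u.1 0 • vv ![1,0,0,-1] + u.1 1 • vv ![0,1,0,-1] + u.1 2 • vv ![0,0,1,-1] := by
  have hsum : u.1 0 + u.1 1 + u.1 2 + u.1 3 = 0 := by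
    have h0 : ∑ i, u.1 i = 0 := u.2
    simpa [Fin.sum_univ_four] using h0
  apply Subtype.ext
  funext i
  fin_cases i <;>
    simp [vv, Matrix.cons_val_zero, Matrix.cons_val_one] <;> omega

end Aux

/-- Every group homomorphism from `Λ₀ ⋊ A₄` to the infinite dihedral group `D_∞`
(realised as `DihedralGroup 0`, since `ZMod 0 = ℤ`) has finite image. -/
theorem hom_LamSemidirect_four_to_infinite_dihedral_finite_image
    (φ : LamSemidirect 4 →* DihedralGroup 0) : (Set.range φ).Finite := by
    -- `φ` kills the alternating-group part
  have hinr : ∀ g : alternatingGroup (Fin 4), φ (SemidirectProduct.inr g) = 1 := by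
    have hA : ∀ c : alternatingGroup (Fin 4), c ^ 3 = 1 → φ (SemidirectProduct.inr c) = 1 := by
      intro c hc
      refine dihedral_cube _ ?_
      rw [← map_pow, ← map_pow, hc, map_one, map_one]
    intro g
    obtain ⟨a, b, ha, hb, rfl⟩ := alt_decomp g
    rw [map_mul, map_mul, hA a ha, hA b hb, one_mul]
  -- conjugation invariance
  have key : ∀ (σ : Equiv.Perm (Fin 4)) (hσ : σ ∈ alternatingGroup (Fin 4)) (u : sumZero 4),
      φ (SemidirectProduct.inl (Multiplicative.ofAdd (permAddAut 4 σ u))) =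
        φ (SemidirectProduct.inl (Multiplicative.ofAdd u)) := by
    intro σ hσ u
    have h1 : (SemidirectProduct.inl (Multiplicative.ofAdd (permAddAut 4 σ u)) :
        LamSemidirect 4) = SemidirectProduct.inr (⟨σ, hσ⟩ : alternatingGroup (Fin 4)) *
          SemidirectProduct.inl (Multiplicative.ofAdd u) *
          (SemidirectProduct.inr (⟨σ, hσ⟩ : alternatingGroup (Fin 4)))⁻¹ :=
      SemidirectProduct.inl_aut (φ := altAct 4) ⟨σ, hσ⟩ (Multiplicative.ofAdd u)
    rw [h1, map_mul, map_mul, map_inv, hinr, one_mul, inv_one, mul_one]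
  have h012 : c012 ∈ alternatingGroup (Fin 4) := Equiv.Perm.mem_alternatingGroup.2 (by decide)
  have h132 : c132 ∈ alternatingGroup (Fin 4) := Equiv.Perm.mem_alternatingGroup.2 (by decide)
  have h013 : c013 ∈ alternatingGroup (Fin 4) := Equiv.Perm.mem_alternatingGroup.2 (by decide)
  have h021 : c021 ∈ alternatingGroup (Fin 4) := Equiv.Perm.mem_alternatingGroup.2 (by decide)
  have e1 : permAddAut 4 c012 (vv ![1,-1,0,0]) = vv ![0,1,-1,0] := by decide
  have e2 : permAddAut 4 c012 (vv ![0,1,-1,0]) = vv ![-1,0,1,0] := by decide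
  have hv12 : φ (SemidirectProduct.inl (Multiplicative.ofAdd (vv ![0,1,-1,0]))) =
      φ (SemidirectProduct.inl (Multiplicative.ofAdd (vv ![1,-1,0,0]))) := by
    rw [← e1, key c012 h012]
  have hv20 : φ (SemidirectProduct.inl (Multiplicative.ofAdd (vv ![-1,0,1,0]))) =
      φ (SemidirectProduct.inl (Multiplicative.ofAdd (vv ![1,-1,0,0]))) := by
    rw [← e2, key c012 h012, hv12]
  have hzero : vv ![1,-1,0,0] + vv ![0,1,-1,0] + vv ![-1,0,1,0] = 0 := by decide
  have comb : φ (SemidirectProduct.inl (Multiplicative.ofAdd (vv ![1,-1,0,0]))) *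
      φ (SemidirectProduct.inl (Multiplicative.ofAdd (vv ![0,1,-1,0]))) *
      φ (SemidirectProduct.inl (Multiplicative.ofAdd (vv ![-1,0,1,0]))) = 1 := by
    simp only [← map_mul, ← ofAdd_add]
    rw [hzero]
    simp
  have hd1 : φ (SemidirectProduct.inl (Multiplicative.ofAdd (vv ![1,-1,0,0]))) = 1 := by
    apply dihedral_cube
    rw [pow_succ, pow_succ, pow_one]
    rw [hv12, hv20] at comb
    exact comb
  -- the three basis vectors of `Λ₀` are killed
  have e3 : permAddAut 4 c132 (vv ![1,-1,0,0]) = vv ![1,0,0,-1] := by decide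
  have e4 : permAddAut 4 c013 (vv ![1,-1,0,0]) = vv ![0,1,0,-1] := by decide
  have e5 : permAddAut 4 c021 (vv ![1,0,0,-1]) = vv ![0,0,1,-1] := by decide
  have h03 : φ (SemidirectProduct.inl (Multiplicative.ofAdd (vv ![1,0,0,-1]))) = 1 := by
    rw [← e3, key c132 h132, hd1]
  have h13 : φ (SemidirectProduct.inl (Multiplicative.ofAdd (vv ![0,1,0,-1]))) = 1 := by
    rw [← e4, key c013 h013, hd1]
  have h23 : φ (SemidirectProduct.inl (Multiplicative.ofAdd (vv ![0,0,1,-1]))) = 1 := by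
    rw [← e5, key c021 h021, h03]
  -- `φ` kills the lattice part
  have hinl : ∀ x : Multiplicative (sumZero 4), φ (SemidirectProduct.inl x) = 1 := by
    intro x
    have hx : x = Multiplicative.ofAdd ((x.toAdd).1 0 • vv ![1,0,0,-1] +
        (x.toAdd).1 1 • vv ![0,1,0,-1] + (x.toAdd).1 2 • vv ![0,0,1,-1]) :=
      congrArg Multiplicative.ofAdd (sumZero_decomp x.toAdd)
    rw [hx, ofAdd_add, ofAdd_add, ofAdd_zsmul, ofAdd_zsmul, ofAdd_zsmul]
    simp only [map_mul, map_zpow]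
    rw [h03, h13, h23]
    simp
  -- conclude
  have htriv : ∀ p : LamSemidirect 4, φ p = 1 := by
    intro p
    rw [← SemidirectProduct.inl_left_mul_inr_right p, map_mul, hinl, hinr, one_mul]
  refine Set.Finite.subset (Set.finite_singleton 1) ?_
  rintro _ ⟨p, rfl⟩
  simp [htriv p]
end

section
/- If a subgroup H of a group G has finite index k and H acts on a metric space X with unbounded orbits, then G admits an action on the product metric space X^k (with, say, the sup metric) with unbounded orbits, via the induced action on the coinduced space. -/
open Bornology

section Aux

variable {G : Type*} [Group G] (H : Subgroup G)

/-- The cocycle: for `g : G` and a coset `c`, the element `(c.out)⁻¹ * g * ((g⁻¹ • c).out)`,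
which lies in `H`. -/
noncomputable def coindCocycle (g : G) (c : G ⧸ H) : G :=
  (Quotient.out c)⁻¹ * g * Quotient.out (g⁻¹ • c)

theorem coindCocycle_mem (g : G) (c : G ⧸ H) : coindCocycle H g c ∈ H := by
  have h1 : QuotientGroup.mk (Quotient.out c) = c := QuotientGroup.out_eq' c
  have h2 : QuotientGroup.mk (g * Quotient.out (g⁻¹ • c)) = c := by
    rw [← smul_eq_mul, MulAction.Quotient.mk_smul_out, smul_smul, mul_inv_cancel, one_smul]
  have := h1.trans h2.symm
  rw [QuotientGroup.eq] at this
  simpa [coindCocycle, mul_assoc] using this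

theorem coindCocycle_one (c : G ⧸ H) : coindCocycle H 1 c = 1 := by
  simp [coindCocycle]

theorem coindCocycle_mul (g₁ g₂ : G) (c : G ⧸ H) :
    coindCocycle H (g₁ * g₂) c = coindCocycle H g₁ c * coindCocycle H g₂ (g₁⁻¹ • c) := by
  have : (g₁ * g₂)⁻¹ • c = g₂⁻¹ • g₁⁻¹ • c := by rw [smul_smul, mul_inv_rev]
  simp only [coindCocycle, this]
  group

/-- The cocycle as an element of `H`. -/
noncomputable def coindCocycleH (g : G) (c : G ⧸ H) : H :=
  ⟨coindCocycle H g c, coindCocycle_mem H g c⟩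

variable {X : Type*} [MetricSpace X] (ρ : H →* (X ≃ᵢ X))

/-- The coinduced action map on functions `G ⧸ H → X`. -/
noncomputable def coindMap (g : G) (f : (G ⧸ H) → X) : (G ⧸ H) → X :=
  fun c => ρ (coindCocycleH H g c) (f (g⁻¹ • c))

theorem coindMap_one (f : (G ⧸ H) → X) : coindMap H ρ 1 f = f := by
  funext c
  have h1 : coindCocycleH H 1 c = 1 := Subtype.ext (coindCocycle_one H c)
  simp [coindMap, h1]

theorem coindMap_mul (g₁ g₂ : G) (f : (G ⧸ H) → X) :
    coindMap H ρ (g₁ * g₂) f = coindMap H ρ g₁ (coindMap H ρ g₂ f) := by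
  funext c
  have hc : (g₁ * g₂)⁻¹ • c = g₂⁻¹ • g₁⁻¹ • c := by rw [smul_smul, mul_inv_rev]
  have hσ : coindCocycleH H (g₁ * g₂) c
      = coindCocycleH H g₁ c * coindCocycleH H g₂ (g₁⁻¹ • c) := by
    ext; exact coindCocycle_mul H g₁ g₂ c
  simp [coindMap, hc, hσ, IsometryEquiv.mul_apply, mul_smul]

theorem coindMap_isometry [Fintype (G ⧸ H)] (g : G) :
    Isometry (coindMap H ρ g) := by
  intro f₁ f₂
  simp only [edist_pi_def, Finset.sup_univ_eq_iSup, coindMap]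
  have h1 : ∀ c : G ⧸ H,
      edist ((ρ (coindCocycleH H g c)) (f₁ (g⁻¹ • c))) ((ρ (coindCocycleH H g c)) (f₂ (g⁻¹ • c)))
        = edist (f₁ (g⁻¹ • c)) (f₂ (g⁻¹ • c)) := fun c =>
    (ρ (coindCocycleH H g c)).isometry.edist_eq _ _
  simp only [h1]
  exact Equiv.iSup_comp (g := fun c => edist (f₁ c) (f₂ c)) (MulAction.toPerm g⁻¹)

/-- The coinduced action as an isometry equivalence. -/
noncomputable def coindIso [Fintype (G ⧸ H)] (g : G) : ((G ⧸ H) → X) ≃ᵢ ((G ⧸ H) → X) where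
  toFun := coindMap H ρ g
  invFun := coindMap H ρ g⁻¹
  left_inv f := by rw [← coindMap_mul, inv_mul_cancel, coindMap_one]
  right_inv f := by rw [← coindMap_mul, mul_inv_cancel, coindMap_one]
  isometry_toFun := coindMap_isometry H ρ g

/-- The coinduced action as a homomorphism to isometry equivalences. -/
noncomputable def coindHom [Fintype (G ⧸ H)] : G →* (((G ⧸ H) → X) ≃ᵢ ((G ⧸ H) → X)) :=
  MonoidHom.mk' (coindIso H ρ) (fun g₁ g₂ => by
    ext f
    exact congrFun (coindMap_mul H ρ g₁ g₂ f) _)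

end Aux

/-- If a subgroup `H` of a group `G` has finite index `k` and `H` acts by isometries on
a metric space `X` with an unbounded orbit, then `G` admits an action by isometries on
the product `X^k` (with the sup metric, the product metric of Mathlib) with an
unbounded orbit. -/
theorem coinduced_action_unbounded_orbit {G : Type*} [Group G] (H : Subgroup G)
    (k : ℕ) (hk : H.index = k) (hk0 : k ≠ 0)
    (X : Type*) [MetricSpace X] (ρ : H →* (X ≃ᵢ X))
    (hunb : ∃ x : X, ¬ IsBounded (Set.range fun h : H => ρ h x)) :
    ∃ τ : G →* ((Fin k → X) ≃ᵢ (Fin k → X)),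
      ∃ p : Fin k → X, ¬ IsBounded (Set.range fun g : G => τ g p) := by
  obtain ⟨x, hx⟩ := hunb
  have hcard : Nat.card (G ⧸ H) = k := hk
  have : Finite (G ⧸ H) := Nat.finite_of_card_ne_zero (hcard ▸ hk0)
  have : Fintype (G ⧸ H) := Fintype.ofFinite _
  let e : (G ⧸ H) ≃ Fin k := Finite.equivFinOfCardEq hcard
  let ψ : ((G ⧸ H) → X) ≃ᵢ (Fin k → X) := IsometryEquiv.piCongrLeft' (Y := fun _ => X) e
  refine ⟨MonoidHom.mk' (fun g => (ψ.symm.trans ((coindHom H ρ g).trans ψ)))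
      (fun g₁ g₂ => by
        ext f
        simp [IsometryEquiv.mul_apply]), fun _ => x, ?_⟩
  intro hb
  apply hx
  have heval : IsBounded ((fun f : Fin k → X => f (e ((1 : G) : G ⧸ H))) ''
      Set.range fun g : G =>
        (ψ.symm.trans ((coindHom H ρ g).trans ψ)) (fun _ => x)) :=
    (LipschitzWith.eval (e ((1 : G) : G ⧸ H))).isBounded_image hb
  refine heval.subset ?_
  rintro _ ⟨h, rfl⟩
  set c₀ : G ⧸ H := ((1 : G) : G ⧸ H)
  set u : G := Quotient.out c₀ with hu
  have humem : u ∈ H := by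
    have : QuotientGroup.mk u = QuotientGroup.mk (1 : G) := QuotientGroup.out_eq' c₀
    rw [QuotientGroup.eq] at this
    simpa using this
  set g : G := u * (h : G) * u⁻¹ with hg
  have hsmul : g⁻¹ • c₀ = c₀ := by
    have h1 : g⁻¹ • c₀ = QuotientGroup.mk (g⁻¹ * u) := by
      rw [← smul_eq_mul]
      exact (MulAction.Quotient.mk_smul_out H g⁻¹ c₀).symm
    rw [h1, show c₀ = QuotientGroup.mk u from (QuotientGroup.out_eq' c₀).symm,
      QuotientGroup.eq]
    have h2 : (g⁻¹ * u)⁻¹ * u = (h : G) := by rw [hg]; group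
    rw [h2]
    exact h.2
  have hσ : coindCocycleH H g c₀ = h := by
    ext
    simp only [coindCocycleH, coindCocycle, hsmul, ← hu]
    rw [hg]
    group
  refine ⟨(ψ.symm.trans ((coindHom H ρ g).trans ψ)) (fun _ => x), ⟨g, rfl⟩, ?_⟩
  have hψ : ∀ f : (G ⧸ H) → X, ∀ c : G ⧸ H, ψ f (e c) = f c := by
    intro f c
    simp [ψ, IsometryEquiv.piCongrLeft', Equiv.piCongrLeft']
  have hψs : (ψ.symm (fun _ : Fin k => x)) = fun _ => x := by
    funext c
    have := hψ (ψ.symm (fun _ : Fin k => x)) c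
    rw [ψ.apply_symm_apply] at this
    exact this.symm
  calc (ψ.symm.trans ((coindHom H ρ g).trans ψ)) (fun _ => x) (e c₀)
      = ψ ((coindHom H ρ g) (ψ.symm fun _ => x)) (e c₀) := by
        rw [IsometryEquiv.trans_apply, IsometryEquiv.trans_apply]
    _ = (coindHom H ρ g (ψ.symm fun _ => x)) c₀ := hψ _ c₀
    _ = ρ h x := by
        rw [hψs]
        show coindMap H ρ g (fun _ => x) c₀ = ρ h x
        rw [coindMap, hσ]
end
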